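/- The series sum over k≥1 of 4^k/(5^k·(2k-1)(2k)(2k+1)) equals -(1/2)ln(5) + (27/(4√5))·ln(α) - 1/2, where α = (1+√5)/2. -/

import Mathlib

open Real

theorem stmt_13 :
    ∑' k : ℕ, 4 ^ (k + 1) / (5 ^ (k + 1) * (2 * (k : ℝ) + 1) * (2 * k + 2) * (2 * k + 3)) =
      -(1 / 2) * Real.log 5
        + (27 / (4 * Real.sqrt 5)) * Real.log ((1 + Real.sqrt 5) / 2) - 1 / 2 := by
  obtain ⟨s, hs⟩ : ∃ y : ℝ, y = Real.sqrt 5 := ⟨_, rfl⟩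
  rw [show Real.sqrt 5 = s from hs.symm]
  have h5 : s ^ 2 = 5 := by rw [hs]; exact Real.sq_sqrt (by norm_num)
  have hs2 : 2 < s := by nlinarith [Real.sqrt_nonneg 5, hs ▸ le_refl s]
  have hs0 : (0:ℝ) < s := by linarith
  have hs0' : s ≠ 0 := ne_of_gt hs0
  obtain ⟨x, hx⟩ : ∃ y : ℝ, y = 2 / s := ⟨_, rfl⟩
  have hx0 : 0 < x := by rw [hx]; positivity
  have hx0' : x ≠ 0 := ne_of_gt hx0
  have hx1 : x < 1 := by rw [hx, div_lt_one hs0]; linarith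
  have habs : |x| < 1 := by rw [abs_of_pos hx0]; exact hx1
  have hx2 : x ^ 2 = 4 / 5 := by rw [hx, div_pow, h5]; norm_num
  have hxx : x * x = 4 / 5 := by linear_combination hx2
  have hxs : x * s = 2 := by rw [hx]; field_simp
  have h5x : 5 * x = 2 * s := by rw [hx]; field_simp; linear_combination (-1) * h5
  obtain ⟨L, hLdef⟩ : ∃ y : ℝ, y = Real.log (1 + x) - Real.log (1 - x) := ⟨_, rfl⟩
  set f : ℕ → ℝ := fun k => x ^ (2 * k + 1) / (2 * (k:ℝ) + 1) with hf
  have A : HasSum f (L / 2) := by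
    rw [hLdef]
    have h := (hasSum_log_sub_log_of_abs_lt_one habs).div_const 2
    convert h using 2 with k
    case e'_3 => rfl
    have : (2 * (k:ℝ) + 1) ≠ 0 := by positivity
    simp only [hf]
    field_simp
  have B : HasSum (fun n : ℕ => ((4:ℝ)/5) ^ (n + 1) / ((n:ℝ) + 1)) (Real.log 5) := by
    have h : |(4:ℝ)/5| < 1 := by rw [abs_of_pos] <;> norm_num
    have := hasSum_pow_div_log_of_abs_lt_one h
    have e : (1:ℝ) - 4/5 = 5⁻¹ := by norm_num
    rwa [e, Real.log_inv, neg_neg] at this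
  have C : HasSum (fun k : ℕ => f (k + 1)) (L / 2 - x) := by
    refine (hasSum_nat_add_iff (f := f) 1).2 ?_
    have e : L / 2 - x + ∑ i ∈ Finset.range 1, f i = L / 2 := by simp [hf]
    rw [e]; exact A
  have T : HasSum
      (fun k : ℕ => (x / 2) * f k - (1 / 2) * (((4:ℝ)/5) ^ (k + 1) / ((k:ℝ) + 1))
        + (1 / (2 * x)) * f (k + 1))
      ((x / 2) * (L / 2) - (1 / 2) * Real.log 5 + (1 / (2 * x)) * (L / 2 - x)) :=
    ((A.mul_left (x / 2)).sub (B.mul_left (1 / 2))).add (C.mul_left (1 / (2 * x)))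
  have podd : ∀ n : ℕ, x ^ (2 * n + 1) = (x ^ 2) ^ n * x := fun n => by
    rw [pow_succ, pow_mul]
  have Teq : (fun k : ℕ => (x / 2) * f k - (1 / 2) * (((4:ℝ)/5) ^ (k + 1) / ((k:ℝ) + 1))
        + (1 / (2 * x)) * f (k + 1))
      = fun k : ℕ => 4 ^ (k + 1) / (5 ^ (k + 1) * (2 * (k : ℝ) + 1) * (2 * k + 2) * (2 * k + 3)) := by
    funext k
    have hk1 : (2 * (k:ℝ) + 1) ≠ 0 := by positivity
    have hk2 : ((k:ℝ) + 1) ≠ 0 := by positivity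
    have hk3 : (2 * (k:ℝ) + 3) ≠ 0 := by positivity
    have h4 : ((4:ℝ)) ^ (k+1) ≠ 0 := by positivity
    have h5k : ((5:ℝ)) ^ (k+1) ≠ 0 := by positivity
    have hpow : (4:ℝ) ^ (k+1) / 5 ^ (k+1) = (x * x) * (x ^ 2) ^ k := by
      rw [hxx, hx2, ← pow_succ', div_pow]
    have E1 : (x / 2) * f k = 4 ^ (k+1) / 5 ^ (k+1) * (1/2) * (1/(2 * (k:ℝ) + 1)) := by
      rw [hpow]; simp only [hf]; rw [podd k]; ring
    have E2 : (1 / 2) * (((4:ℝ)/5) ^ (k + 1) / ((k:ℝ) + 1))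
        = 4 ^ (k+1) / 5 ^ (k+1) * (1/2) * (1/((k:ℝ) + 1)) := by
      rw [div_pow]; ring
    have E3 : (1 / (2 * x)) * f (k + 1)
        = 4 ^ (k+1) / 5 ^ (k+1) * (1/2) * (1/(2 * (k:ℝ) + 3)) := by
      rw [hpow]; simp only [hf]; rw [podd (k+1)]
      push_cast
      field_simp
      ring
    rw [E1, E2, E3]
    field_simp
    ring
  have Veq : (x / 2) * (L / 2) - (1 / 2) * Real.log 5 + (1 / (2 * x)) * (L / 2 - x)
      = -(1 / 2) * Real.log 5 + (27 / (4 * s)) * Real.log ((1 + s) / 2) - 1 / 2 := by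
    have hsm2 : s - 2 ≠ 0 := by intro h; nlinarith
    have h1x : (0:ℝ) < 1 + x := by linarith
    have h2x : (0:ℝ) < 1 - x := by linarith
    have a2 : ((1 + s)/2) ^ 2 = (3 + s)/2 := by field_simp; linear_combination 1 * h5
    have a6 : ((1 + s)/2) ^ 6 = 9 + 4 * s := by
      calc ((1 + s)/2) ^ 6 = (((1 + s)/2) ^ 2) ^ 3 := by ring
        _ = ((3 + s)/2) ^ 3 := by rw [a2]
        _ = 9 + 4 * s := by field_simp; linear_combination (s + 9) * h5
    have key : (1 + x) / (1 - x) = ((1 + s)/2) ^ 6 := by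
      rw [a6, hx]
      have h2x' : (1:ℝ) - 2/s ≠ 0 := by rw [← hx]; exact ne_of_gt h2x
      field_simp
      linear_combination (-4) * h5
    have hLa : L = 6 * Real.log ((1 + s) / 2) := by
      rw [hLdef, ← Real.log_div (ne_of_gt h1x) (ne_of_gt h2x), key, Real.log_pow]
      push_cast; ring
    rw [hLa]
    field_simp
    linear_combination (24 * s * Real.log ((1 + s) / 2)) * hxx
      - (108 / 5 * Real.log ((1 + s) / 2)) * h5x
  rw [← Teq]
  rw [T.tsum_eq, Veq]
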